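/- Let k be a positive integer, let A be a ⌈p/2⌉ × ⌊p/2⌋ binary (0/1) matrix with exactly k nonzero entries per row and at most 2k nonzero entries per column, and let ε < 0 with 2k|ε| < 1. Define the p×p matrix Θ in block form with identity diagonal blocks I_{⌈p/2⌉}, I_{⌊p/2⌋} and off-diagonal blocks εA and εAᵀ. Then Θ is a diagonally dominant symmetric M-matrix (Θ ∈ ℳ^{p×p}), its inverse Σ := Θ⁻¹ satisfies Σ_{jj} ≥ 1 for all j, and the maximum off-diagonal correlation satisfies max_{j≠k} Σ_{jk}/√(Σ_{jj}Σ_{kk}) ≤ max_{j≠k} Σ_{jk} ≤ 2k|ε| / (1 − (2kε)²). In particular, if 4k|ε| ≤ min(1 − γ⁻¹, 1/2) for some γ > 1, then γ(Σ) ≤ γ. -/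

import Mathlib

open MeasureTheory Matrix Real

namespace CovEst

/-- The convex cone of symmetric positive semidefinite matrices with
nonpositive off-diagonal entries (symmetric `M`-matrices). -/
def Mmat (m : Type*) [Fintype m] : Set (Matrix m m ℝ) :=
  {A | A.PosSemidef ∧ ∀ i j, i ≠ j → A i j ≤ 0}

/-- Frobenius (trace) inner product `⟨A, B⟩ = tr (Aᵀ B)` on matrices. -/
noncomputable def mip {m : Type*} [Fintype m] (A B : Matrix m m ℝ) : ℝ :=
  (Aᵀ * B).trace

/-- The symmetrized Stein (divergence) loss
`L(Θ, Θ*) = (1/(2p)) ⟨Θ - Θ*, (Θ*)⁻¹ - Θ⁻¹⟩`. -/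
noncomputable def stein {m : Type*} [Fintype m] [DecidableEq m] (T Ts : Matrix m m ℝ) : ℝ :=
  (2 * (Fintype.card m : ℝ))⁻¹ * mip (T - Ts) (Ts⁻¹ - T⁻¹)

/-- Maximal correlation `max_{j ≠ k} Σ_{jk} / √(Σ_{jj} Σ_{kk})` of a covariance matrix. -/
noncomputable def maxCorr {m : Type*} (V : Matrix m m ℝ) : ℝ :=
  sSup {x | ∃ j k, j ≠ k ∧ x = V j k / Real.sqrt (V j j * V k k)}

/-- `γ(Σ) = (1 - max_{j ≠ k} Σ_{jk}/√(Σ_{jj}Σ_{kk}))⁻¹`. -/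
noncomputable def gammaV {m : Type*} (V : Matrix m m ℝ) : ℝ := (1 - maxCorr V)⁻¹

/-- Largest off-diagonal entry. -/
noncomputable def maxOffDiag {m : Type*} (V : Matrix m m ℝ) : ℝ :=
  sSup {x | ∃ j k, j ≠ k ∧ x = V j k}

/-- Entrywise sup-norm `‖A‖_∞ = max_{j,k} |A_{jk}|`. -/
noncomputable def norminf {m l : Type*} (A : Matrix m l ℝ) : ℝ :=
  sSup {x | ∃ i j, x = |A i j|}

/-- Sample covariance matrix `S = n⁻¹ Xᵀ X`. -/
noncomputable def sampleCov {n p : ℕ} (X : Fin n → Fin p → ℝ) : Matrix (Fin p) (Fin p) ℝ :=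
  (n : ℝ)⁻¹ • ((Matrix.of X)ᵀ * Matrix.of X)

/-- The (negative log-likelihood) objective `⟨Θ, S⟩ - log det Θ`. -/
noncomputable def objective {m : Type*} [Fintype m] [DecidableEq m] (S T : Matrix m m ℝ) : ℝ :=
  mip T S - Real.log T.det

/-- `T` is the sign-constrained Gaussian MLE for the sample covariance `S`:
it minimizes `⟨Θ, S⟩ - log det Θ` over positive definite `Θ ∈ ℳ`. -/
def IsSignMLE {m : Type*} [Fintype m] [DecidableEq m] (S T : Matrix m m ℝ) : Prop :=
  T ∈ Mmat m ∧ T.PosDef ∧ ∀ T' ∈ Mmat m, T'.PosDef → objective S T ≤ objective S T'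

/-- Density of the `N(0, V)` distribution on `ℝᵖ` (with respect to Lebesgue measure). -/
noncomputable def gaussPdf {p : ℕ} (V : Matrix (Fin p) (Fin p) ℝ) (x : Fin p → ℝ) : ENNReal :=
  ENNReal.ofReal ((((2 * Real.pi) ^ p * V.det) ^ (-(1 : ℝ) / 2)) *
    Real.exp (-(x ⬝ᵥ (V⁻¹ *ᵥ x)) / 2))

/-- The centered multivariate Gaussian measure `N(0, V)` on `ℝᵖ`. -/
noncomputable def gaussMeasure {p : ℕ} (V : Matrix (Fin p) (Fin p) ℝ) : Measure (Fin p → ℝ) :=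
  volume.withDensity (gaussPdf V)

/-- Law of a data matrix `X ∈ ℝ^{n×p}` with i.i.d. rows `N(0, V)`. -/
noncomputable def model (n : ℕ) {p : ℕ} (V : Matrix (Fin p) (Fin p) ℝ) :
    Measure (Fin n → Fin p → ℝ) :=
  Measure.pi fun _ : Fin n => gaussMeasure V

/-- The class `𝒟` of diagonal matrices with strictly positive diagonal. -/
def posDiag (p : ℕ) : Set (Matrix (Fin p) (Fin p) ℝ) :=
  {T | ∃ d : Fin p → ℝ, (∀ j, 0 < d j) ∧ T = Matrix.diagonal d}

/-- Largest (real) eigenvalue of a matrix. -/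
noncomputable def lamMax {m : Type*} [Fintype m] (A : Matrix m m ℝ) : ℝ :=
  sSup {t | ∃ v : m → ℝ, v ≠ 0 ∧ A *ᵥ v = t • v}

/-- Smallest (real) eigenvalue of a matrix. -/
noncomputable def lamMin {m : Type*} [Fintype m] (A : Matrix m m ℝ) : ℝ :=
  sInf {t | ∃ v : m → ℝ, v ≠ 0 ∧ A *ᵥ v = t • v}

/-- Spectral norm (largest singular value) of a matrix. -/
noncomputable def specNorm {m : Type*} [Fintype m] (A : Matrix m m ℝ) : ℝ :=
  sSup {t | ∃ v : m → ℝ, (∑ i, (v i) ^ 2) = 1 ∧ t = Real.sqrt (∑ i, ((A *ᵥ v) i) ^ 2)}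

/-- Squared Frobenius norm. -/
noncomputable def frobSq {m l : Type*} [Fintype m] [Fintype l] (A : Matrix m l ℝ) : ℝ :=
  ∑ i, ∑ j, (A i j) ^ 2


/-- Matrices inherit the product measurable structure. -/
instance matrixMeasurableSpace {m l : Type*} : MeasurableSpace (Matrix m l ℝ) :=
  MeasurableSpace.pi


/-- The two-block perturbation `Θ = [[I, εA], [εAᵀ, I]]`. -/
noncomputable def blockTheta (p : ℕ) (ε : ℝ)
    (A : Matrix (Fin ((p + 1) / 2)) (Fin (p / 2)) ℝ) :
    Matrix (Fin ((p + 1) / 2) ⊕ Fin (p / 2)) (Fin ((p + 1) / 2) ⊕ Fin (p / 2)) ℝ :=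
  Matrix.fromBlocks 1 (ε • A) (ε • Aᵀ) 1

/-- Properties of the minimax construction: for a binary matrix `A` with `k`
nonzero entries per row, at most `2k` per column, and `ε < 0` with
`2k|ε| < 1`, the matrix `Θ = [[I, εA], [εAᵀ, I]]` is a diagonally dominant
symmetric `M`-matrix, `Σ = Θ⁻¹` has diagonal entries `≥ 1`, all its
correlations are bounded by `max_{j≠l} Σ_{jl} ≤ 2k|ε| / (1 - (2kε)²)`, and if
moreover `4k|ε| ≤ min(1 - γ⁻¹, 1/2)` for some `γ > 1`, then `γ(Σ) ≤ γ`. -/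
private lemma pow_bounds {ι : Type*} [Fintype ι] [DecidableEq ι] (t : Matrix ι ι ℝ) (δ : ℝ)
    (h0 : ∀ i j, 0 ≤ t i j) (hr : ∀ i, ∑ j, t i j ≤ δ) (hδ : 0 ≤ δ) :
    ∀ n : ℕ, (∀ i j, 0 ≤ (t ^ n) i j) ∧ (∀ i, ∑ j, (t ^ n) i j ≤ δ ^ n) := by
  intro n
  induction n with
  | zero =>
    constructor
    · intro i j
      rw [pow_zero, Matrix.one_apply]
      split <;> norm_num
    · intro i
      simp [Matrix.one_apply]
  | succ n ih =>
    constructor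
    · intro i j
      rw [pow_succ, Matrix.mul_apply]
      exact Finset.sum_nonneg fun m _ => mul_nonneg (ih.1 i m) (h0 m j)
    · intro i
      have : ∑ j, (t ^ (n+1)) i j = ∑ m, (t ^ n) i m * ∑ j, t m j := by
        simp only [pow_succ, Matrix.mul_apply, Finset.mul_sum]
        rw [Finset.sum_comm]
      rw [this, pow_succ]
      calc ∑ m, (t ^ n) i m * ∑ j, t m j ≤ ∑ m, (t ^ n) i m * δ :=
            Finset.sum_le_sum fun m _ => mul_le_mul_of_nonneg_left (hr m) (ih.1 i m)
        _ = (∑ m, (t ^ n) i m) * δ := by rw [Finset.sum_mul]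
        _ ≤ δ ^ n * δ := mul_le_mul_of_nonneg_right (ih.2 i) hδ

private lemma pow_block_zero {ι : Type*} [Fintype ι] [DecidableEq ι] (t : Matrix ι ι ℝ)
    (f : ι → Bool) (hb : ∀ i j, f i = f j → t i j = 0) :
    ∀ (n : ℕ) (i j : ι), ((f i = f j) ↔ Odd n) → (t ^ n) i j = 0 := by
  intro n
  induction n with
  | zero =>
    intro i j h
    have hij : f i ≠ f j := by simpa [Nat.odd_iff] using h
    have : i ≠ j := fun e => hij (by rw [e])
    simp [pow_zero, Matrix.one_apply_ne this]
  | succ n ih =>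
    intro i j h
    rw [pow_succ, Matrix.mul_apply]
    apply Finset.sum_eq_zero
    intro m _
    by_cases hm : f m = f j
    · rw [hb m j hm, mul_zero]
    · have hkey : (f i = f m) ↔ Odd n := by
        rw [Nat.odd_add_one] at h
        cases hfi : f i <;> cases hfj : f j <;> cases hfm : f m <;> simp_all
      rw [ih i m hkey, zero_mul]

private lemma psd_one_sub {ι : Type*} [Fintype ι] [DecidableEq ι] (t : Matrix ι ι ℝ) (δ : ℝ)
    (h0 : ∀ i j, 0 ≤ t i j) (hr : ∀ i, ∑ j, t i j ≤ δ)
    (hsym : ∀ i j, t i j = t j i) (hδ1 : δ ≤ 1) : (1 - t).PosSemidef := by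
  rw [Matrix.posSemidef_iff_dotProduct_mulVec]
  constructor
  · ext i j
    simp only [Matrix.conjTranspose_apply, Matrix.sub_apply, Matrix.one_apply, star_trivial,
      hsym j i]
    congr 1
    simp [eq_comm]
  · intro x
    have expand : star x ⬝ᵥ ((1 - t) *ᵥ x) =
        (∑ i, x i ^ 2) - ∑ i, ∑ j, t i j * (x i * x j) := by
      simp only [dotProduct, Matrix.mulVec, Matrix.sub_apply, star_trivial,
        dotProduct, sub_mul, Finset.sum_sub_distrib, mul_sub, Finset.mul_sum]
      congr 1
      · refine Finset.sum_congr rfl fun i _ => ?_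
        rw [Finset.sum_eq_single i]
        · simp [Matrix.one_apply, sq]
        · intro b _ hb
          simp [Matrix.one_apply_ne (Ne.symm hb)]
        · simp
      · refine Finset.sum_congr rfl fun i _ => Finset.sum_congr rfl fun j _ => by ring
    have hx2 : (0:ℝ) ≤ ∑ i, x i ^ 2 := Finset.sum_nonneg fun i _ => sq_nonneg _
    have key : ∑ i, ∑ j, t i j * (x i * x j) ≤ δ * ∑ i, x i ^ 2 := by
      have step1 : ∑ i, ∑ j, t i j * (x i * x j)
          ≤ ∑ i, ∑ j, (t i j * x i ^ 2 / 2 + t i j * x j ^ 2 / 2) := by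
        refine Finset.sum_le_sum fun i _ => Finset.sum_le_sum fun j _ => ?_
        nlinarith [sq_nonneg (x i - x j), h0 i j, mul_nonneg (h0 i j) (sq_nonneg (x i - x j))]
      have e1 : ∑ i, ∑ j, t i j * x i ^ 2 / 2 ≤ δ / 2 * ∑ i, x i ^ 2 := by
        have : ∀ i, ∑ j, t i j * x i ^ 2 / 2 = x i ^ 2 / 2 * ∑ j, t i j := by
          intro i; rw [Finset.mul_sum]; exact Finset.sum_congr rfl fun j _ => by ring
        calc ∑ i, ∑ j, t i j * x i ^ 2 / 2 = ∑ i, x i ^ 2 / 2 * ∑ j, t i j := by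
              exact Finset.sum_congr rfl fun i _ => this i
          _ ≤ ∑ i, x i ^ 2 / 2 * δ :=
              Finset.sum_le_sum fun i _ => mul_le_mul_of_nonneg_left (hr i) (by positivity)
          _ = δ / 2 * ∑ i, x i ^ 2 := by rw [Finset.mul_sum]; exact Finset.sum_congr rfl fun i _ => by ring
      have e2 : ∑ i, ∑ j, t i j * x j ^ 2 / 2 ≤ δ / 2 * ∑ i, x i ^ 2 := by
        rw [Finset.sum_comm]
        have : ∀ j, ∑ i, t i j * x j ^ 2 / 2 = x j ^ 2 / 2 * ∑ i, t j i := by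
          intro j
          rw [Finset.mul_sum]
          exact Finset.sum_congr rfl fun i _ => by rw [hsym i j]; ring
        calc ∑ j, ∑ i, t i j * x j ^ 2 / 2 = ∑ j, x j ^ 2 / 2 * ∑ i, t j i :=
              Finset.sum_congr rfl fun j _ => this j
          _ ≤ ∑ j, x j ^ 2 / 2 * δ :=
              Finset.sum_le_sum fun j _ => mul_le_mul_of_nonneg_left (hr j) (by positivity)
          _ = δ / 2 * ∑ j, x j ^ 2 := by rw [Finset.mul_sum]; exact Finset.sum_congr rfl fun j _ => by ring
      calc ∑ i, ∑ j, t i j * (x i * x j)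
          ≤ ∑ i, ∑ j, (t i j * x i ^ 2 / 2 + t i j * x j ^ 2 / 2) := step1
        _ = (∑ i, ∑ j, t i j * x i ^ 2 / 2) + ∑ i, ∑ j, t i j * x j ^ 2 / 2 := by
            rw [← Finset.sum_add_distrib]
            exact Finset.sum_congr rfl fun i _ => by rw [← Finset.sum_add_distrib]
        _ ≤ δ / 2 * ∑ i, x i ^ 2 + δ / 2 * ∑ i, x i ^ 2 := add_le_add e1 e2
        _ = δ * ∑ i, x i ^ 2 := by ring
    rw [expand]
    nlinarith


set_option maxHeartbeats 1600000 in
theorem stmt_18 (p k : ℕ) (hk : 0 < k) (ε : ℝ) (hε : ε < 0)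
    (hkε : 2 * (k : ℝ) * |ε| < 1)
    (A : Matrix (Fin ((p + 1) / 2)) (Fin (p / 2)) ℝ)
    (hbin : ∀ i j, A i j = 0 ∨ A i j = 1)
    (hrow : ∀ i, ∑ j, A i j = (k : ℝ))
    (hcol : ∀ j, ∑ i, A i j ≤ 2 * (k : ℝ)) :
    blockTheta p ε A ∈ Mmat (Fin ((p + 1) / 2) ⊕ Fin (p / 2)) ∧
    (∀ i, ∑ j ∈ Finset.univ.erase i, |blockTheta p ε A i j| ≤ blockTheta p ε A i i) ∧
    (∀ j, 1 ≤ (blockTheta p ε A)⁻¹ j j) ∧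
    (∀ j l, j ≠ l →
      (blockTheta p ε A)⁻¹ j l /
          Real.sqrt ((blockTheta p ε A)⁻¹ j j * (blockTheta p ε A)⁻¹ l l) ≤
        (blockTheta p ε A)⁻¹ j l ∧
      (blockTheta p ε A)⁻¹ j l ≤ 2 * k * |ε| / (1 - (2 * k * ε) ^ 2)) ∧
    (∀ γ : ℝ, 1 < γ → 4 * k * |ε| ≤ min (1 - γ⁻¹) (1 / 2) →
      gammaV (blockTheta p ε A)⁻¹ ≤ γ) := by
  classical
  have habs : |ε| = -ε := abs_of_neg hε
  obtain ⟨t, ht⟩ : ∃ t' : Matrix (Fin ((p + 1) / 2) ⊕ Fin (p / 2)) (Fin ((p + 1) / 2) ⊕ Fin (p / 2)) ℝ,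
      t' = (-ε) • Matrix.fromBlocks 0 A Aᵀ 0 := ⟨_, rfl⟩
  obtain ⟨δ, hδdef⟩ : ∃ d : ℝ, d = 2 * (k : ℝ) * (-ε) := ⟨_, rfl⟩
  have hε0 : (0:ℝ) ≤ -ε := by linarith
  have hδ0 : (0:ℝ) ≤ δ := by rw [hδdef]; positivity
  have hδ1 : δ < 1 := by rw [hδdef, ← habs]; exact hkε
  have hδsq : δ ^ 2 < 1 := by nlinarith
  have hden : (0:ℝ) < 1 - δ ^ 2 := by linarith
  have hA0 : ∀ i j, 0 ≤ A i j := fun i j => by rcases hbin i j with h | h <;> rw [h] <;> norm_num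
  -- entries of t
  have ht0 : ∀ i j, 0 ≤ t i j := by
    rintro (a | a) (b | b) <;> rw [ht] <;>
      simp only [Matrix.smul_apply, Matrix.fromBlocks_apply₁₁, Matrix.fromBlocks_apply₁₂,
        Matrix.fromBlocks_apply₂₁, Matrix.fromBlocks_apply₂₂, Matrix.zero_apply,
        Matrix.transpose_apply, smul_eq_mul, mul_zero, le_refl] <;>
      exact mul_nonneg hε0 (hA0 _ _)
  have tsym : ∀ i j, t i j = t j i := by
    rintro (a | a) (b | b) <;> rw [ht] <;>
      simp [Matrix.smul_apply, Matrix.transpose_apply]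
  -- block indicator
  obtain ⟨f, hf⟩ : ∃ f' : (Fin ((p + 1) / 2) ⊕ Fin (p / 2)) → Bool,
      f' = Sum.elim (fun _ => false) (fun _ => true) := ⟨_, rfl⟩
  have hb : ∀ i j, f i = f j → t i j = 0 := by
    rintro (a | a) (b | b) h
    · rw [ht]; simp
    · exact absurd h (by rw [hf]; simp)
    · exact absurd h (by rw [hf]; simp)
    · rw [ht]; simp
  have tdiag : ∀ i, t i i = 0 := fun i => hb i i rfl
  -- row sums
  have trow : ∀ i, ∑ j, t i j ≤ δ := by
    rintro (a | a)
    · rw [Fintype.sum_sum_type]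
      have h1 : ∑ b, t (Sum.inl a) (Sum.inl b) = 0 := by rw [ht]; simp
      have h2 : ∑ b : Fin (p/2), t (Sum.inl a) (Sum.inr b) = (-ε) * (k:ℝ) := by
        simp only [ht, Matrix.smul_apply, Matrix.fromBlocks_apply₁₂, smul_eq_mul]
        rw [← Finset.mul_sum, hrow a]
      rw [h1, h2, hδdef]
      have : (k:ℝ) ≥ 0 := Nat.cast_nonneg k
      nlinarith
    · rw [Fintype.sum_sum_type]
      have h2 : ∑ b : Fin (p/2), t (Sum.inr a) (Sum.inr b) = 0 := by rw [ht]; simp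
      have h1 : ∑ b, t (Sum.inr a) (Sum.inl b) = (-ε) * ∑ b, A b a := by
        simp only [ht, Matrix.smul_apply, Matrix.fromBlocks_apply₂₁, smul_eq_mul,
          Matrix.transpose_apply]
        rw [← Finset.mul_sum]
      rw [h1, h2, hδdef, add_zero]
      have := hcol a
      nlinarith
  -- Theta = 1 - t
  have hΘ : blockTheta p ε A = 1 - t := by
    rw [ht]
    ext i j
    rcases i with a | a <;> rcases j with b | b <;>
      simp [blockTheta, Matrix.sub_apply, Matrix.smul_apply, Matrix.one_apply,
        Sum.inl.injEq, Sum.inr.injEq, mul_zero, sub_zero, zero_sub] <;> ring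
  have hpow := pow_bounds t δ ht0 trow hδ0
  have hentry : ∀ (n : ℕ) i j, (t ^ n) i j ≤ δ ^ n := fun n i j =>
    le_trans (Finset.single_le_sum (fun l _ => (hpow n).1 i l) (Finset.mem_univ j)) ((hpow n).2 i)
  have hsumm : ∀ j l, Summable fun n : ℕ => (t ^ n) j l := fun j l =>
    Summable.of_nonneg_of_le (fun n => (hpow n).1 j l) (fun n => hentry n j l)
      (summable_geometric_of_lt_one hδ0 hδ1)
  -- the inverse
  have hinv : (blockTheta p ε A)⁻¹ = Matrix.of fun j l => ∑' n : ℕ, (t ^ n) j l := by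
    rw [hΘ]
    apply Matrix.inv_eq_right_inv
    ext j l
    rw [Matrix.sub_mul, Matrix.one_mul, Matrix.sub_apply]
    have hmul : (t * Matrix.of fun j l => ∑' n : ℕ, (t ^ n) j l) j l
        = ∑' n : ℕ, (t ^ (n + 1)) j l := by
      rw [Matrix.mul_apply]
      calc ∑ m, t j m * ((Matrix.of fun j l => ∑' n : ℕ, (t ^ n) j l) m l)
          = ∑ m, ∑' n : ℕ, t j m * (t ^ n) m l := by
            refine Finset.sum_congr rfl fun m _ => ?_
            rw [Matrix.of_apply, tsum_mul_left]
        _ = ∑' n : ℕ, ∑ m, t j m * (t ^ n) m l :=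
            (Summable.tsum_finsetSum fun m _ => (hsumm m l).mul_left _).symm
        _ = ∑' n : ℕ, (t ^ (n + 1)) j l := by
            refine tsum_congr fun n => ?_
            rw [pow_succ', Matrix.mul_apply]
    rw [hmul, Matrix.of_apply, Summable.tsum_eq_zero_add (hsumm j l)]
    simp [pow_zero]
  -- diagonal entries ≥ 1
  have hdiag1 : ∀ j, 1 ≤ (blockTheta p ε A)⁻¹ j j := by
    intro j
    rw [hinv, Matrix.of_apply]
    have h1 : ((t ^ 0) j j : ℝ) = 1 := by simp [pow_zero, Matrix.one_apply_eq]
    calc (1:ℝ) = (t ^ 0) j j := h1.symm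
      _ ≤ ∑' n : ℕ, (t ^ n) j j := Summable.le_tsum (hsumm j j) 0 fun n _ => (hpow n).1 j j
  have hnn : ∀ j l, 0 ≤ (blockTheta p ε A)⁻¹ j l := by
    intro j l
    rw [hinv, Matrix.of_apply]
    exact tsum_nonneg fun n => (hpow n).1 j l
  -- off-diagonal bound
  have hgeo2 : Summable fun m : ℕ => (δ ^ 2) ^ m :=
    summable_geometric_of_lt_one (sq_nonneg δ) hδsq
  have hseven : ∀ j l, Summable fun m : ℕ => (t ^ (2 * m)) j l := fun j l =>
    Summable.of_nonneg_of_le (fun m => (hpow _).1 j l)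
      (fun m => by calc (t ^ (2*m)) j l ≤ δ ^ (2*m) := hentry _ j l
                     _ = (δ ^ 2) ^ m := by rw [← pow_mul]) hgeo2
  have hsodd : ∀ j l, Summable fun m : ℕ => (t ^ (2 * m + 1)) j l := fun j l =>
    Summable.of_nonneg_of_le (fun m => (hpow _).1 j l)
      (fun m => by calc (t ^ (2*m+1)) j l ≤ δ ^ (2*m+1) := hentry _ j l
                     _ = δ * (δ ^ 2) ^ m := by rw [pow_succ, ← pow_mul]; ring)
      (hgeo2.mul_left δ)
  have hparity := pow_block_zero t f hb
  have hcross : ∀ j l, j ≠ l → (blockTheta p ε A)⁻¹ j l ≤ δ / (1 - δ ^ 2) := by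
    intro j l hjl
    rw [hinv, Matrix.of_apply, ← tsum_even_add_odd (f := fun n => (t ^ n) j l) (hseven j l) (hsodd j l)]
    by_cases hfl : f j = f l
    · -- same block: odd powers vanish
      have hodd0 : ∀ m : ℕ, (t ^ (2 * m + 1)) j l = 0 := fun m =>
        hparity _ j l (iff_of_true hfl (Nat.odd_iff.mpr (by omega)))
      have hz : ∑' m : ℕ, (t ^ (2 * m + 1)) j l = 0 := by
        rw [tsum_congr hodd0]; exact tsum_zero
      rw [hz, add_zero, Summable.tsum_eq_zero_add (hseven j l)]
      have h00 : (t ^ (2 * 0)) j l = 0 := by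
        have h20 : (2 * 0 : ℕ) = 0 := rfl
        rw [h20, pow_zero, Matrix.one_apply_ne hjl]
      rw [h00, zero_add]
      calc ∑' m : ℕ, (t ^ (2 * (m + 1))) j l
          ≤ ∑' m : ℕ, δ ^ 2 * (δ ^ 2) ^ m := by
            refine Summable.tsum_le_tsum (fun m => ?_) ?_ (hgeo2.mul_left _)
            · calc (t ^ (2*(m+1))) j l ≤ δ ^ (2*(m+1)) := hentry _ j l
                _ = δ ^ 2 * (δ ^ 2) ^ m := by rw [← pow_mul]; ring
            · exact Summable.of_nonneg_of_le (fun m => (hpow _).1 j l)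
                (fun m => by calc (t ^ (2*(m+1))) j l ≤ δ ^ (2*(m+1)) := hentry _ j l
                               _ = δ ^ 2 * (δ ^ 2) ^ m := by rw [← pow_mul]; ring)
                (hgeo2.mul_left _)
        _ = δ ^ 2 * (1 - δ ^ 2)⁻¹ := by rw [tsum_mul_left, tsum_geometric_of_lt_one (sq_nonneg δ) hδsq]
        _ ≤ δ / (1 - δ ^ 2) := by
            rw [div_eq_mul_inv]
            have h1 : (0:ℝ) ≤ (1 - δ ^ 2)⁻¹ := by positivity
            have h2 : δ ^ 2 ≤ δ := by nlinarith
            exact mul_le_mul_of_nonneg_right h2 h1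
    · -- different blocks: even powers vanish
      have heven0 : ∀ m : ℕ, (t ^ (2 * m)) j l = 0 := fun m =>
        hparity _ j l (iff_of_false hfl (by rw [Nat.odd_iff]; omega))
      have hz : ∑' m : ℕ, (t ^ (2 * m)) j l = 0 := by
        rw [tsum_congr heven0]; exact tsum_zero
      rw [hz, zero_add]
      calc ∑' m : ℕ, (t ^ (2 * m + 1)) j l
          ≤ ∑' m : ℕ, δ * (δ ^ 2) ^ m := by
            refine Summable.tsum_le_tsum (fun m => ?_) (hsodd j l) (hgeo2.mul_left δ)
            calc (t ^ (2*m+1)) j l ≤ δ ^ (2*m+1) := hentry _ j l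
              _ = δ * (δ ^ 2) ^ m := by rw [pow_succ, ← pow_mul]; ring
        _ = δ * (1 - δ ^ 2)⁻¹ := by rw [tsum_mul_left, tsum_geometric_of_lt_one (sq_nonneg δ) hδsq]
        _ = δ / (1 - δ ^ 2) := (div_eq_mul_inv _ _).symm
  have hsqrt1 : ∀ j l, (1:ℝ) ≤ Real.sqrt ((blockTheta p ε A)⁻¹ j j * (blockTheta p ε A)⁻¹ l l) := by
    intro j l
    rw [show (1:ℝ) = Real.sqrt 1 from Real.sqrt_one.symm]
    apply Real.sqrt_le_sqrt
    nlinarith [hdiag1 j, hdiag1 l]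
  have hcorr : ∀ j l, j ≠ l →
      (blockTheta p ε A)⁻¹ j l /
        Real.sqrt ((blockTheta p ε A)⁻¹ j j * (blockTheta p ε A)⁻¹ l l) ≤
      (blockTheta p ε A)⁻¹ j l := fun j l _ => div_le_self (hnn j l) (hsqrt1 j l)
  have hRHS : 2 * (k:ℝ) * |ε| / (1 - (2 * (k:ℝ) * ε) ^ 2) = δ / (1 - δ ^ 2) := by
    rw [habs, hδdef]; ring_nf
  refine ⟨⟨?_, ?_⟩, ?_, hdiag1, ?_, ?_⟩
  · rw [hΘ]; exact psd_one_sub t δ ht0 trow tsym hδ1.le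
  · intro i j hij
    rw [hΘ, Matrix.sub_apply, Matrix.one_apply_ne hij]
    linarith [ht0 i j]
  · intro i
    have hdd : ∑ j ∈ Finset.univ.erase i, |blockTheta p ε A i j| = ∑ j ∈ Finset.univ.erase i, t i j := by
      refine Finset.sum_congr rfl fun j hj => ?_
      have hji : i ≠ j := fun e => (Finset.mem_erase.mp hj).1 e.symm
      rw [hΘ, Matrix.sub_apply, Matrix.one_apply_ne hji, zero_sub, abs_neg, abs_of_nonneg (ht0 i j)]
    have hii : blockTheta p ε A i i = 1 := by
      rw [hΘ, Matrix.sub_apply, Matrix.one_apply_eq, tdiag i, sub_zero]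
    rw [hdd, hii]
    calc ∑ j ∈ Finset.univ.erase i, t i j ≤ ∑ j, t i j :=
          Finset.sum_le_sum_of_subset_of_nonneg (Finset.subset_univ _)
            (fun j _ _ => ht0 i j)
      _ ≤ δ := trow i
      _ ≤ 1 := hδ1.le
  · intro j l hjl
    exact ⟨hcorr j l hjl, by rw [hRHS]; exact hcross j l hjl⟩
  · intro γ hγ h4
    rw [le_min_iff, habs] at h4
    have h4a : 2 * δ ≤ 1 - γ⁻¹ := by rw [hδdef]; linarith [h4.1]
    have h4b : δ ≤ 1/4 := by rw [hδdef]; linarith [h4.2]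
    have hbound : δ / (1 - δ ^ 2) ≤ 1 - γ⁻¹ := by
      rw [div_le_iff₀ hden]
      nlinarith
    have hγ0 : (0:ℝ) < γ⁻¹ := inv_pos.mpr (by linarith)
    have hγ1 : γ⁻¹ < 1 := inv_lt_one_of_one_lt₀ hγ
    have hub : maxCorr (blockTheta p ε A)⁻¹ ≤ 1 - γ⁻¹ := by
      apply Real.sSup_le
      · rintro x ⟨j, l, hjl, rfl⟩
        exact le_trans (hcorr j l hjl) (le_trans (hcross j l hjl) hbound)
      · linarith
    rw [gammaV]
    have h2 : γ⁻¹ ≤ 1 - maxCorr (blockTheta p ε A)⁻¹ := by linarith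
    calc (1 - maxCorr (blockTheta p ε A)⁻¹)⁻¹ ≤ (γ⁻¹)⁻¹ := inv_anti₀ hγ0 h2
      _ = γ := inv_inv γ


end CovEst
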